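/- Let d be uniformly distributed on the annulus with inner radius (k−1)r_t/K and outer radius k r_t/K, let g be an independent complex Gaussian with |g|² exponentially distributed with mean 1, and let ℓ(x) = 𝓛(d₀/x)^ε be the path-loss function. Then the CDF of φ = |g|² ℓ(d) is F(φ) = 1 − (2/ε) · (φ/ℓ(r_t))^{−2/ε} / ((k/K)² − ((k−1)/K)²) · [γ(2/ε, (φ/ℓ(r_t))(k/K)^ε) − γ(2/ε, (φ/ℓ(r_t))((k−1)/K)^ε)] for φ > 0, where γ(·,·) is the lower incomplete gamma function. -/

import Mathlib

open MeasureTheory Real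

noncomputable def lowerGamma (a x : ℝ) : ℝ := ∫ t in Set.Ioc (0 : ℝ) x, t ^ (a - 1) * Real.exp (-t)

section Aux
open Set Metric ProbabilityTheory

lemma lg_integrableOn {s : ℝ} (hs : 0 < s) (M : ℝ) :
    IntegrableOn (fun t : ℝ => t ^ (s - 1) * Real.exp (-t)) (Icc 0 M) := by
  rw [integrableOn_Icc_iff_integrableOn_Ioc]
  have := (Real.GammaIntegral_convergent hs).mono_set (Ioc_subset_Ioi_self : Ioc (0:ℝ) M ⊆ Ioi 0)
  exact this.congr_fun (fun t ht => by ring) measurableSet_Ioc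

lemma lg_continuousOn {s : ℝ} (hs : 0 < s) (M : ℝ) :
    ContinuousOn (fun x => lowerGamma s x) (Icc 0 M) := by
  simpa [lowerGamma] using intervalIntegral.continuousOn_primitive (lg_integrableOn hs M)

lemma lg_eq_intervalIntegral {s x : ℝ} (hx : 0 ≤ x) :
    lowerGamma s x = ∫ t in (0:ℝ)..x, t ^ (s - 1) * Real.exp (-t) := by
  rw [intervalIntegral.integral_of_le hx, lowerGamma]

lemma lg_hasDerivAt {s x : ℝ} (hs : 0 < s) (hx : 0 < x) :
    HasDerivAt (fun y => lowerGamma s y) (x ^ (s - 1) * Real.exp (-x)) x := by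
  have hint : IntervalIntegrable (fun t : ℝ => t ^ (s - 1) * Real.exp (-t)) volume 0 x := by
    rw [intervalIntegrable_iff_integrableOn_Icc_of_le hx.le]
    exact lg_integrableOn hs x
  have hcont : ContinuousAt (fun t : ℝ => t ^ (s - 1) * Real.exp (-t)) x := by
    have h1 : ContinuousAt (fun t : ℝ => t ^ (s - 1)) x :=
      Real.continuousAt_rpow_const x _ (Or.inl hx.ne')
    exact h1.mul (Real.continuous_exp.continuousAt.comp (continuousAt_id.neg))
  have h := intervalIntegral.integral_hasDerivAt_right hint
    ⟨Set.univ, Filter.univ_mem, ((measurable_id.pow_const (s-1)).mul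
      (Real.measurable_exp.comp measurable_neg)).aestronglyMeasurable.restrict⟩ hcont
  refine h.congr_of_eventuallyEq ?_
  filter_upwards [eventually_gt_nhds hx] with y hy
  exact lg_eq_intervalIntegral hy.le

lemma cont_rpow {ε : ℝ} (hε : 0 < ε) : Continuous fun r : ℝ => r ^ ε :=
  continuous_iff_continuousAt.2 fun x => Real.continuousAt_rpow_const x ε (Or.inr hε.le)

lemma key_integral {a b c ε : ℝ} (ha : 0 ≤ a) (hab : a ≤ b) (hc : 0 < c) (hε : 0 < ε) :
    ∫ r in a..b, r * Real.exp (-(c * r ^ ε)) =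
      (lowerGamma (2/ε) (c * b ^ ε) - lowerGamma (2/ε) (c * a ^ ε)) / (ε * c ^ (2/ε)) := by
  set s : ℝ := 2 / ε with hsdef
  have hs : 0 < s := div_pos two_pos hε
  have hF := intervalIntegral.integral_eq_sub_of_hasDeriv_right_of_le hab
    (f := fun r => lowerGamma s (c * r ^ ε) / (ε * c ^ s))
    (f' := fun r => r * Real.exp (-(c * r ^ ε))) ?_ ?_ ?_
  · rw [hF]; ring
  · have hinner : Continuous fun r : ℝ => c * r ^ ε := continuous_const.mul (cont_rpow hε)
    refine (ContinuousOn.comp ((lg_continuousOn hs (c * b ^ ε)).div_const _)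
      hinner.continuousOn ?_)
    intro r hr
    have h0r : 0 ≤ r := le_trans ha hr.1
    constructor
    · positivity
    · exact mul_le_mul_of_nonneg_left (Real.rpow_le_rpow h0r hr.2 hε.le) hc.le
  · intro r hr
    have hrpos : 0 < r := lt_of_le_of_lt ha hr.1
    have hxpos : 0 < c * r ^ ε := mul_pos hc (Real.rpow_pos_of_pos hrpos ε)
    have hinner : HasDerivAt (fun r : ℝ => c * r ^ ε) (c * (ε * r ^ (ε - 1))) r :=
      (Real.hasDerivAt_rpow_const (Or.inl hrpos.ne')).const_mul c
    have houter := lg_hasDerivAt hs hxpos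
    have h := (houter.comp r hinner).div_const (ε * c ^ s)
    have hval : (c * r ^ ε) ^ (s - 1) * Real.exp (-(c * r ^ ε)) * (c * (ε * r ^ (ε - 1)))
        / (ε * c ^ s) = r * Real.exp (-(c * r ^ ε)) := by
      have h1 : (c * r ^ ε) ^ (s - 1) = c ^ (s - 1) * r ^ (ε * (s - 1)) := by
        rw [Real.mul_rpow hc.le (Real.rpow_nonneg hrpos.le ε), ← Real.rpow_mul hrpos.le]
      have h2 : c ^ (s - 1) * c = c ^ s := by
        rw [← Real.rpow_add_one hc.ne' (s - 1)]; ring_nf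
      have h3 : r ^ (ε * (s - 1)) * r ^ (ε - 1) = r := by
        rw [← Real.rpow_add hrpos]
        have : ε * (s - 1) + (ε - 1) = 1 := by
          rw [hsdef, mul_sub, mul_div_assoc', mul_comm ε 2, mul_div_assoc, div_self hε.ne']; ring
        rw [this, Real.rpow_one]
      have hcs : (0:ℝ) < c ^ s := Real.rpow_pos_of_pos hc s
      field_simp [h1]
      rw [h1, show c * (c ^ (s-1) * r ^ (ε * (s-1))) * r ^ (ε-1)
          = (c ^ (s-1) * c) * (r ^ (ε * (s-1)) * r ^ (ε-1))
          by ring, h2, h3]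
    simpa [Function.comp, hval] using h.hasDerivWithinAt
  · exact (continuous_id.mul
      (((continuous_const.mul (cont_rpow hε)).neg).rexp)).intervalIntegrable a b

lemma annulus_eq (a b : ℝ) :
    {x : EuclideanSpace ℝ (Fin 2) | a ≤ ‖x‖ ∧ ‖x‖ ≤ b}
      = closedBall (0:EuclideanSpace ℝ (Fin 2)) b \ ball (0:EuclideanSpace ℝ (Fin 2)) a := by
  ext x
  simp [mem_closedBall_zero_iff, mem_ball_zero_iff, not_lt, and_comm]

lemma vol_annulus {a b : ℝ} (ha : 0 ≤ a) (hab : a ≤ b) :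
    (volume {x : EuclideanSpace ℝ (Fin 2) | a ≤ ‖x‖ ∧ ‖x‖ ≤ b}).toReal
      = (b ^ 2 - a ^ 2) * (volume (ball (0:EuclideanSpace ℝ (Fin 2)) 1)).toReal := by
  rw [annulus_eq]
  rw [measure_diff (ball_subset_closedBall.trans (closedBall_subset_closedBall hab))
    measurableSet_ball.nullMeasurableSet measure_ball_lt_top.ne]
  rw [ENNReal.toReal_sub_of_le (measure_mono (ball_subset_closedBall.trans
    (closedBall_subset_closedBall hab))) measure_closedBall_lt_top.ne]
  rw [Measure.addHaar_closedBall _ _ (le_trans ha hab), Measure.addHaar_ball _ _ ha]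
  rw [finrank_euclideanSpace_fin]
  rw [ENNReal.toReal_mul, ENNReal.toReal_mul, ENNReal.toReal_ofReal (by positivity),
    ENNReal.toReal_ofReal (by positivity)]
  ring

lemma integral_annulus {a b c ε : ℝ} (ha : 0 ≤ a) (hab : a ≤ b) (hε : 0 < ε) :
    ∫ x in {x : EuclideanSpace ℝ (Fin 2) | a ≤ ‖x‖ ∧ ‖x‖ ≤ b}, Real.exp (-(c * ‖x‖ ^ ε))
      = 2 * (volume (ball (0:EuclideanSpace ℝ (Fin 2)) 1)).toReal
          * ∫ r in a..b, r * Real.exp (-(c * r ^ ε)) := by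
  have hAmeas : MeasurableSet {x : EuclideanSpace ℝ (Fin 2) | a ≤ ‖x‖ ∧ ‖x‖ ≤ b} := by
    rw [annulus_eq]; exact measurableSet_closedBall.diff measurableSet_ball
  set f : ℝ → ℝ := Set.indicator (Icc a b) (fun r => Real.exp (-(c * r ^ ε))) with hf
  have h1 : ∫ x in {x : EuclideanSpace ℝ (Fin 2) | a ≤ ‖x‖ ∧ ‖x‖ ≤ b},
      Real.exp (-(c * ‖x‖ ^ ε)) = ∫ x : EuclideanSpace ℝ (Fin 2), f ‖x‖ := by
    rw [← integral_indicator hAmeas]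
    congr 1
  rw [h1, MeasureTheory.integral_fun_norm_addHaar (volume : Measure (EuclideanSpace ℝ (Fin 2))) f]
  rw [finrank_euclideanSpace_fin]
  simp only [nsmul_eq_mul, smul_eq_mul, Nat.cast_ofNat, pow_one]
  have h2 : ∀ y : ℝ, y ^ (2 - 1) * f y
      = Set.indicator (Icc a b) (fun r => r * Real.exp (-(c * r ^ ε))) y := by
    intro y
    by_cases hy : y ∈ Icc a b
    · simp [hf, Set.indicator_of_mem hy]
    · simp [hf, Set.indicator_of_notMem hy]
  calc 2 * ((volume (ball (0:EuclideanSpace ℝ (Fin 2)) 1)).toReal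
        * ∫ y in Ioi (0:ℝ), y ^ (2-1) * f y)
      = 2 * ((volume (ball (0:EuclideanSpace ℝ (Fin 2)) 1)).toReal *
          ∫ y in Ioi (0:ℝ), Set.indicator (Icc a b) (fun r => r * Real.exp (-(c * r ^ ε))) y) := by
        rw [setIntegral_congr_fun measurableSet_Ioi (fun y _ => h2 y)]
    _ = 2 * (volume (ball (0:EuclideanSpace ℝ (Fin 2)) 1)).toReal
          * ∫ r in a..b, r * Real.exp (-(c * r ^ ε)) := by
        rw [setIntegral_indicator measurableSet_Icc]
        have hset : (Ioi (0:ℝ) ∩ Icc a b : Set ℝ) =ᵐ[volume] Ioc a b := by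
          have e1 : (Ioi (0:ℝ) ∩ Icc a b : Set ℝ) =ᵐ[volume] (Ioi (0:ℝ) ∩ Ioc a b : Set ℝ) :=
            Filter.EventuallyEq.inter (Filter.EventuallyEq.refl _ _) Ioc_ae_eq_Icc.symm
          have e2 : (Ioi (0:ℝ) ∩ Ioc a b : Set ℝ) = Ioc a b :=
            Set.inter_eq_self_of_subset_right (fun x hx => lt_of_le_of_lt ha hx.1)
          rw [e2] at e1; exact e1
        rw [setIntegral_congr_set hset, intervalIntegral.integral_of_le hab]
        ring

lemma expMeasure_Iio {t : ℝ} (ht : 0 ≤ t) :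
    ProbabilityTheory.expMeasure 1 (Iio t) = ENNReal.ofReal (1 - Real.exp (-t)) := by
  have hpdf : ProbabilityTheory.gammaPDF 1 1 = ProbabilityTheory.exponentialPDF 1 := rfl
  rw [ProbabilityTheory.expMeasure, ProbabilityTheory.gammaMeasure,
    withDensity_apply _ measurableSet_Iio, hpdf]
  have : ∫⁻ y in Iio t, exponentialPDF 1 y = ∫⁻ y in Iic t, exponentialPDF 1 y :=
    setLIntegral_congr Iio_ae_eq_Iic
  rw [this, lintegral_exponentialPDF_eq_antiDeriv one_pos, if_pos ht, one_mul]

end Aux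

open Metric in
set_option maxHeartbeats 1000000 in
theorem annulus_noma_gain_cdf
    {Ω : Type*} [MeasurableSpace Ω] (P : Measure Ω) [IsProbabilityMeasure P]
    (K k : ℕ) (hk : 1 ≤ k) (hK : k ≤ K) (rt L d0 ε : ℝ)
    (hrt : 0 < rt) (hL : 0 < L) (hd0 : 0 < d0) (hε : 0 < ε)
    (X : Ω → EuclideanSpace ℝ (Fin 2)) (hXmeas : Measurable X)
    (g2 : Ω → ℝ) (hg2meas : Measurable g2)
    (hXlaw : Measure.map X P
      = (volume {x : EuclideanSpace ℝ (Fin 2) |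
            ((k : ℝ) - 1) * rt / K ≤ ‖x‖ ∧ ‖x‖ ≤ (k : ℝ) * rt / K})⁻¹
          • volume.restrict {x : EuclideanSpace ℝ (Fin 2) |
            ((k : ℝ) - 1) * rt / K ≤ ‖x‖ ∧ ‖x‖ ≤ (k : ℝ) * rt / K})
    (hg2law : Measure.map g2 P = ProbabilityTheory.expMeasure 1)
    (hindep : ProbabilityTheory.IndepFun X g2 P) :
    ∀ φ₀ : ℝ, 0 < φ₀ →
      (P {ω | g2 ω * (L * (d0 / ‖X ω‖) ^ ε) < φ₀}).toReal
        = 1 - (2 / ε) * (φ₀ / (L * (d0 / rt) ^ ε)) ^ (-(2 / ε))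
            / (((k : ℝ) / K) ^ 2 - (((k : ℝ) - 1) / K) ^ 2)
          * (lowerGamma (2 / ε) ((φ₀ / (L * (d0 / rt) ^ ε)) * ((k : ℝ) / K) ^ ε)
             - lowerGamma (2 / ε) ((φ₀ / (L * (d0 / rt) ^ ε)) * (((k : ℝ) - 1) / K) ^ ε)) := by
  intro φ₀ hφ₀
  have hK0 : (0:ℝ) < K := by
    have h1 : 1 ≤ K := le_trans hk hK
    exact_mod_cast h1
  have hk1 : (1:ℝ) ≤ (k:ℝ) := by exact_mod_cast hk
  have hkK : (k:ℝ) ≤ (K:ℝ) := by exact_mod_cast hK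
  set a : ℝ := ((k:ℝ) - 1) * rt / K with hadef
  set b : ℝ := (k:ℝ) * rt / K with hbdef
  have ha : 0 ≤ a := div_nonneg (mul_nonneg (by linarith) hrt.le) hK0.le
  have hab : a < b := by
    rw [hadef, hbdef, div_lt_div_iff_of_pos_right hK0]
    nlinarith
  set A := {x : EuclideanSpace ℝ (Fin 2) | a ≤ ‖x‖ ∧ ‖x‖ ≤ b} with hAdef
  set c : ℝ := φ₀ / (L * d0 ^ ε) with hcdef
  have hd0e : (0:ℝ) < d0 ^ ε := Real.rpow_pos_of_pos hd0 ε
  have hc : 0 < c := div_pos hφ₀ (mul_pos hL hd0e)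
  haveI hν : IsProbabilityMeasure (ProbabilityTheory.expMeasure 1) :=
    ProbabilityTheory.isProbabilityMeasure_expMeasure one_pos
  have hℓmeas : Measurable fun x : EuclideanSpace ℝ (Fin 2) => L * (d0 / ‖x‖) ^ ε :=
    ((measurable_const.div measurable_norm).pow_const ε).const_mul L
  set S : Set ((EuclideanSpace ℝ (Fin 2)) × ℝ) :=
    {p | p.2 * (L * (d0 / ‖p.1‖) ^ ε) < φ₀} with hSdef
  have hSmeas : MeasurableSet S :=
    measurableSet_lt (measurable_snd.mul (hℓmeas.comp measurable_fst)) measurable_const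
  have hpre : {ω | g2 ω * (L * (d0 / ‖X ω‖) ^ ε) < φ₀} = (fun ω => (X ω, g2 ω)) ⁻¹' S := rfl
  have hmap : Measure.map (fun ω => (X ω, g2 ω)) P
      = (Measure.map X P).prod (Measure.map g2 P) :=
    (ProbabilityTheory.indepFun_iff_map_prod_eq_prod_map_map hXmeas.aemeasurable
      hg2meas.aemeasurable).mp hindep
  have hPS : P {ω | g2 ω * (L * (d0 / ‖X ω‖) ^ ε) < φ₀}
      = ((Measure.map X P).prod (Measure.map g2 P)) S := by
    rw [hpre, ← Measure.map_apply (hXmeas.prodMk hg2meas) hSmeas, hmap]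
  rw [hPS, hXlaw, hg2law]
  set μ : Measure (EuclideanSpace ℝ (Fin 2)) := (volume A)⁻¹ • volume.restrict A with hμdef
  haveI hμprob : IsProbabilityMeasure μ := by
    have h := Measure.isProbabilityMeasure_map (μ := P) hXmeas.aemeasurable
    rw [hXlaw] at h
    exact h
  rw [Measure.prod_apply hSmeas]
  have hslice : ∀ x : EuclideanSpace ℝ (Fin 2), ‖x‖ ≠ 0 →
      ProbabilityTheory.expMeasure 1 (Prod.mk x ⁻¹' S)
        = ENNReal.ofReal (1 - Real.exp (-(c * ‖x‖ ^ ε))) := by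
    intro x hx
    have hn : 0 < ‖x‖ := lt_of_le_of_ne (norm_nonneg x) (Ne.symm hx)
    have hℓpos : 0 < L * (d0 / ‖x‖) ^ ε :=
      mul_pos hL (Real.rpow_pos_of_pos (div_pos hd0 hn) ε)
    have hset : Prod.mk x ⁻¹' S = Set.Iio (φ₀ / (L * (d0 / ‖x‖) ^ ε)) := by
      ext y
      simp only [hSdef, Set.mem_preimage, Set.mem_setOf_eq, Set.mem_Iio]
      rw [lt_div_iff₀ hℓpos]
    have hne : (‖x‖:ℝ) ^ ε ≠ 0 := (Real.rpow_pos_of_pos hn ε).ne'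
    have harg : φ₀ / (L * (d0 / ‖x‖) ^ ε) = c * ‖x‖ ^ ε := by
      rw [Real.div_rpow hd0.le (norm_nonneg x), hcdef]
      field_simp
    have hargnn : 0 ≤ c * ‖x‖ ^ ε := le_of_lt (mul_pos hc (Real.rpow_pos_of_pos hn ε))
    rw [hset, harg, expMeasure_Iio hargnn]
  have h0 : μ {x : EuclideanSpace ℝ (Fin 2) | ¬ ‖x‖ ≠ 0} = 0 := by
    have hset : {x : EuclideanSpace ℝ (Fin 2) | ¬ ‖x‖ ≠ 0}
        = {(0 : EuclideanSpace ℝ (Fin 2))} := by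
      ext x; simp [norm_eq_zero]
    rw [hset, hμdef, Measure.smul_apply, Measure.restrict_apply (measurableSet_singleton _)]
    rw [measure_mono_null Set.inter_subset_left (measure_singleton _), smul_zero]
  have haeμ : ∀ᵐ x ∂μ, ‖x‖ ≠ 0 := by
    rw [MeasureTheory.ae_iff]
    exact h0
  have hae : (fun x => ProbabilityTheory.expMeasure 1 (Prod.mk x ⁻¹' S))
      =ᵐ[μ] fun x => ENNReal.ofReal (1 - Real.exp (-(c * ‖x‖ ^ ε))) := by
    filter_upwards [haeμ] with x hx using hslice x hx
  rw [lintegral_congr_ae hae]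
  have hcontf : Continuous fun x : EuclideanSpace ℝ (Fin 2) => 1 - Real.exp (-(c * ‖x‖ ^ ε)) :=
    continuous_const.sub (((continuous_const.mul ((cont_rpow hε).comp continuous_norm)).neg).rexp)
  have hnn : ∀ x : EuclideanSpace ℝ (Fin 2), 0 ≤ 1 - Real.exp (-(c * ‖x‖ ^ ε)) := by
    intro x
    have h1 : Real.exp (-(c * ‖x‖ ^ ε)) ≤ 1 := by
      rw [Real.exp_le_one_iff]
      have : 0 ≤ c * ‖x‖ ^ ε := mul_nonneg hc.le (Real.rpow_nonneg (norm_nonneg x) ε)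
      linarith
    linarith
  have hint := MeasureTheory.integral_eq_lintegral_of_nonneg_ae (μ := μ)
      (f := fun x : EuclideanSpace ℝ (Fin 2) => 1 - Real.exp (-(c * ‖x‖ ^ ε)))
      (Filter.Eventually.of_forall hnn) hcontf.aestronglyMeasurable
  rw [← hint]
  have hint_exp : Integrable (fun x : EuclideanSpace ℝ (Fin 2) =>
      Real.exp (-(c * ‖x‖ ^ ε))) μ := by
    refine Integrable.mono' (integrable_const (1:ℝ))
      (((continuous_const.mul ((cont_rpow hε).comp continuous_norm)).neg).rexp).aestronglyMeasurable
      (Filter.Eventually.of_forall fun x => ?_)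
    rw [Real.norm_eq_abs, abs_of_pos (Real.exp_pos _), Real.exp_le_one_iff]
    have : 0 ≤ c * ‖x‖ ^ ε := mul_nonneg hc.le (Real.rpow_nonneg (norm_nonneg x) ε)
    linarith
  have hsplit : ∫ x, (1 - Real.exp (-(c * ‖x‖ ^ ε))) ∂μ
      = 1 - ∫ x, Real.exp (-(c * ‖x‖ ^ ε)) ∂μ := by
    rw [integral_sub (integrable_const 1) hint_exp, integral_const]
    simp
  rw [hsplit]
  have hsm : ∫ x, Real.exp (-(c * ‖x‖ ^ ε)) ∂μ
      = (volume A).toReal⁻¹ * ∫ x in A, Real.exp (-(c * ‖x‖ ^ ε)) := by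
    rw [hμdef, integral_smul_measure, ENNReal.toReal_inv, smul_eq_mul]
  rw [hsm, hAdef, integral_annulus ha hab.le hε, key_integral ha hab.le hc hε,
    vol_annulus ha hab.le]
  -- final algebra
  set V : ℝ := (volume (ball (0:EuclideanSpace ℝ (Fin 2)) 1)).toReal with hVdef
  have hV : 0 < V := ENNReal.toReal_pos (measure_ball_pos volume _ one_pos).ne' measure_ball_lt_top.ne
  set c' : ℝ := φ₀ / (L * (d0 / rt) ^ ε) with hc'def
  have hc'eq : c' = c * rt ^ ε := by
    rw [hc'def, hcdef, Real.div_rpow hd0.le hrt.le]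
    have h1 : (0:ℝ) < rt ^ ε := Real.rpow_pos_of_pos hrt ε
    field_simp
  have hargb : c' * ((k:ℝ)/K) ^ ε = c * b ^ ε := by
    rw [hc'eq, hbdef, mul_assoc, ← Real.mul_rpow hrt.le (div_nonneg (by linarith) hK0.le)]
    congr 2
    ring
  have harga : c' * (((k:ℝ)-1)/K) ^ ε = c * a ^ ε := by
    rw [hc'eq, hadef, mul_assoc, ← Real.mul_rpow hrt.le (div_nonneg (by linarith) hK0.le)]
    congr 2
    ring
  have hexp : c' ^ (-(2/ε)) = (c ^ (2/ε))⁻¹ * (rt ^ 2)⁻¹ := by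
    rw [hc'eq, Real.mul_rpow hc.le (Real.rpow_nonneg hrt.le ε), ← Real.rpow_mul hrt.le]
    rw [Real.rpow_neg hc.le]
    have h2 : ε * (-(2/ε)) = -(2:ℝ) := by field_simp
    rw [h2]
    congr 1
    rw [show (-(2:ℝ)) = -((2:ℕ):ℝ) by norm_num, Real.rpow_neg hrt.le, Real.rpow_natCast]
  have hD : b ^ 2 - a ^ 2 = rt ^ 2 * (((k:ℝ)/K) ^ 2 - (((k:ℝ)-1)/K) ^ 2) := by
    rw [hadef, hbdef]
    field_simp
  have hDpos : 0 < ((k:ℝ)/K) ^ 2 - (((k:ℝ)-1)/K) ^ 2 := by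
    have h1 : (((k:ℝ)-1)/K) < ((k:ℝ)/K) := by
      rw [div_lt_div_iff_of_pos_right hK0]; linarith
    have h2 : 0 ≤ ((k:ℝ)-1)/K := div_nonneg (by linarith) hK0.le
    have := pow_lt_pow_left₀ h1 h2 (n := 2) (by norm_num)
    linarith
  rw [hargb, harga, hexp, hD]
  have hcs : (0:ℝ) < c ^ (2/ε) := Real.rpow_pos_of_pos hc _
  have hrt2 : (rt:ℝ) ^ 2 ≠ 0 := by positivity
  have halg : ∀ Δ Dd Vv cs r2 e : ℝ, Vv ≠ 0 → cs ≠ 0 → r2 ≠ 0 → Dd ≠ 0 → e ≠ 0 →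
      (r2 * Dd * Vv)⁻¹ * (2 * Vv * (Δ / (e * cs))) = 2 / e * (cs⁻¹ * r2⁻¹) / Dd * Δ := by
    intro Δ Dd Vv cs r2 e h1 h2 h3 h4 h5
    field_simp
  congr 1
  exact halg _ _ _ _ _ _ hV.ne' hcs.ne' hrt2 hDpos.ne' hε.ne'
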